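/- Let U, V ∈ SO(3), S = diag(s₁,s₂,s₃), F = USVᵀ, and M = UVᵀ. For i ∈ {1,2,3} and θ ∈ ℝ, define R(θ) = exp(θ·(Ue_i)∧)·M. Then exp(θ·(Ue_i)∧)·M = M·exp(θ·(Ve_i)∧), and tr(FᵀR(θ)) = s_i + (s_j + s_k)·cos θ, where {i,j,k} = {1,2,3}. Consequently the matrix Fisher density satisfies p(R(θ); F) = (e^{s_i}/c(S))·exp((s_j + s_k)·cos θ). -/

import Mathlib

open Matrix MeasureTheory Real

noncomputable section

abbrev Mat3 := Matrix (Fin 3) (Fin 3) ℝ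

instance : MeasurableSpace Mat3 :=
  show MeasurableSpace (Fin 3 → Fin 3 → ℝ) from inferInstance

/-- `SO(3)`: real 3×3 matrices with `RᵀR = I` and `det R = 1`. -/
def SO3 : Set Mat3 := {R | Rᵀ * R = 1 ∧ R.det = 1}

/-- The hat map `∧ : ℝ³ → ℝ^{3×3}`, `(hat v) w = v × w`. -/
def hat (v : Fin 3 → ℝ) : Mat3 :=
  !![0, -v 2, v 1; v 2, 0, -v 0; -v 1, v 0, 0]

/-- The vee map `∨`, inverse of the hat map on skew-symmetric matrices. -/
def vee (A : Mat3) : Fin 3 → ℝ := ![A 2 1, A 0 2, A 1 0]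

/-- `ν` is the bi-invariant Haar probability measure on `SO(3)`. -/
def IsHaarSO3 (ν : Measure Mat3) : Prop :=
  IsProbabilityMeasure ν ∧ ν SO3ᶜ = 0 ∧
    (∀ A ∈ SO3, Measure.map (fun R => A * R) ν = ν) ∧
    (∀ A ∈ SO3, Measure.map (fun R => R * A) ν = ν)

/-- The normalizing constant `c(F) = ∫_{SO(3)} etr(FᵀQ) dQ`. -/
def cF (ν : Measure Mat3) (F : Mat3) : ℝ := ∫ Q, Real.exp ((Fᵀ * Q).trace) ∂ν

/-- The tangent-space deviation `ν_R = (QS − SQᵀ)∨`, `Q = UᵀRV`. -/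
def nuR (U S V R : Mat3) : Fin 3 → ℝ :=
  vee ((Uᵀ * R * V) * S - S * (Uᵀ * R * V)ᵀ)

/-- `Σ_c = Σ − P(tr(S)I − S)Pᵀ`. -/
def sigmaC {n : ℕ} (Sig : Matrix (Fin n) (Fin n) ℝ) (P : Matrix (Fin n) (Fin 3) ℝ)
    (S : Mat3) : Matrix (Fin n) (Fin n) ℝ :=
  Sig - P * (S.trace • (1 : Mat3) - S) * Pᵀ

/-- The matrix Fisher–Gaussian density with parameters `(μ, Σ, P, U, S, V)`. -/
def mfg {n : ℕ} (ν : Measure Mat3) (μ : Fin n → ℝ) (Sig : Matrix (Fin n) (Fin n) ℝ)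
    (P : Matrix (Fin n) (Fin 3) ℝ) (U S V : Mat3) (R : Mat3) (x : Fin n → ℝ) : ℝ :=
  (cF ν (U * S * Vᵀ) * Real.sqrt ((2 * Real.pi) ^ n * (sigmaC Sig P S).det))⁻¹ *
    Real.exp (-(1/2) * ((x - (μ + P.mulVec (nuR U S V R))) ⬝ᵥ
      ((sigmaC Sig P S)⁻¹ *ᵥ (x - (μ + P.mulVec (nuR U S V R)))))) *
    Real.exp ((U * S * Vᵀ * Rᵀ).trace)

/-! ### Auxiliary lemmas -/

theorem exp_cube_aux {𝔸 : Type*} [NormedRing 𝔸] [NormedAlgebra ℝ 𝔸] [CompleteSpace 𝔸]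
    (A : 𝔸) (hA : A * A * A = -A) (θ : ℝ) :
    NormedSpace.exp (θ • A) = 1 + Real.sin θ • A + (1 - Real.cos θ) • (A * A) := by
  set c : ℝ → 𝔸 := fun t => 1 + Real.sin t • A + (1 - Real.cos t) • (A * A) with hc
  set e : ℝ → 𝔸 := fun t => NormedSpace.exp ((-t) • A) with he
  have hcA : ∀ t, c t * A = Real.cos t • A + Real.sin t • (A * A) := by
    intro t
    simp only [hc, add_mul, one_mul, smul_mul_assoc]
    rw [hA]
    simp only [smul_neg, smul_sub]
    module
  have hcomm : ∀ t : ℝ, Commute A ((-t) • A) := fun t => (Commute.refl A).smul_right _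
  have hce : ∀ t, HasDerivAt (fun u => c u * e u) 0 t := by
    intro t
    have hderivc : HasDerivAt c (Real.cos t • A + Real.sin t • (A * A)) t := by
      have h1 : HasDerivAt (fun u : ℝ => Real.sin u • A) (Real.cos t • A) t :=
        (Real.hasDerivAt_sin t).smul_const A
      have h2 : HasDerivAt (fun u : ℝ => (1 - Real.cos u) • (A * A))
          (Real.sin t • (A * A)) t := by
        have := ((hasDerivAt_const t (1:ℝ)).sub (Real.hasDerivAt_cos t)).smul_const (A * A)
        simpa using this
      simpa [hc, Pi.add_def] using ((hasDerivAt_const t (1:𝔸)).add h1).add h2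
    have hderive : HasDerivAt e (-(e t * A)) t := by
      have h1 : HasDerivAt (fun u : ℝ => NormedSpace.exp (u • A))
          (NormedSpace.exp ((-t) • A) * A) (-t) :=
        hasDerivAt_exp_smul_const A (-t)
      have h2 : HasDerivAt (fun u : ℝ => -u) (-1 : ℝ) t := (hasDerivAt_id t).neg
      have := h1.scomp t h2
      simpa [he, Function.comp_def, neg_smul] using this
    have hAe : A * e t = e t * A := ((hcomm t).exp_right).eq
    have key : (Real.cos t • A + Real.sin t • (A * A)) * e t + c t * -(e t * A) = 0 := by
      rw [mul_neg, ← hAe, ← mul_assoc, hcA t]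
      abel
    have := hderivc.mul hderive
    rw [key] at this
    exact this
  have hconst : ∀ t, c t * e t = 1 := by
    intro t
    have hd : Differentiable ℝ (fun u => c u * e u) := fun u => (hce u).differentiableAt
    have h0 : (fun u => c u * e u) t = (fun u => c u * e u) 0 :=
      is_const_of_deriv_eq_zero hd (fun u => (hce u).deriv) t 0
    simpa [hc, he, NormedSpace.exp_zero] using h0
  have hinv : e θ * NormedSpace.exp (θ • A) = 1 := by
    rw [he]
    letI : NormedAlgebra ℚ 𝔸 := NormedAlgebra.restrictScalars ℚ ℝ 𝔸
    rw [← NormedSpace.exp_add_of_commute (((Commute.refl A).smul_left _).smul_right _)]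
    simp
  calc NormedSpace.exp (θ • A) = 1 * NormedSpace.exp (θ • A) := (one_mul _).symm
    _ = c θ * e θ * NormedSpace.exp (θ • A) := by rw [hconst θ]
    _ = c θ * (e θ * NormedSpace.exp (θ • A)) := by rw [mul_assoc]
    _ = c θ := by rw [hinv, mul_one]

theorem exp_cube_mat (A : Mat3) (hA : A * A * A = -A) (θ : ℝ) :
    NormedSpace.exp (θ • A) = 1 + Real.sin θ • A + (1 - Real.cos θ) • (A * A) := by
  letI : SeminormedRing Mat3 := Matrix.linftyOpSemiNormedRing
  letI : NormedRing Mat3 := Matrix.linftyOpNormedRing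
  letI : NormedAlgebra ℝ Mat3 := Matrix.linftyOpNormedAlgebra
  exact exp_cube_aux A hA θ

theorem hat_conj_gen (M : Mat3) (v : Fin 3 → ℝ) :
    Mᵀ * hat (M *ᵥ v) * M = M.det • hat v := by
  ext a b
  fin_cases a <;> fin_cases b <;>
    simp [hat, Matrix.mul_apply, Matrix.mulVec, dotProduct, Fin.sum_univ_three,
      Matrix.det_fin_three, Matrix.smul_apply] <;> ring

theorem SO3_mul_transpose {R : Mat3} (hR : R ∈ SO3) : R * Rᵀ = 1 :=
  mul_eq_one_comm.mp hR.1

theorem SO3_transpose {R : Mat3} (hR : R ∈ SO3) : Rᵀ ∈ SO3 :=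
  ⟨by rw [Matrix.transpose_transpose]; exact mul_eq_one_comm.mp hR.1,
   by rw [Matrix.det_transpose]; exact hR.2⟩

theorem hat_conj {R : Mat3} (hR : R ∈ SO3) (v : Fin 3 → ℝ) :
    hat (R *ᵥ v) = R * hat v * Rᵀ := by
  have h1 := hat_conj_gen R v
  have h2 : R * (Rᵀ * hat (R *ᵥ v) * R) * Rᵀ = hat (R *ᵥ v) := by
    rw [Matrix.mul_assoc, Matrix.mul_assoc, SO3_mul_transpose hR, Matrix.mul_one,
      ← Matrix.mul_assoc, SO3_mul_transpose hR, Matrix.one_mul]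
  rw [h1, hR.2, one_smul] at h2
  exact h2.symm

theorem exp_conj_so3 {R : Mat3} (hR : R ∈ SO3) (A : Mat3) :
    NormedSpace.exp (R * A * Rᵀ) = R * NormedSpace.exp A * Rᵀ := by
  have hRRT : R * Rᵀ = 1 := mul_eq_one_comm.mp hR.1
  let Ru : Mat3ˣ := ⟨R, Rᵀ, hRRT, hR.1⟩
  have := Matrix.exp_units_conj Ru A
  simpa [Ru] using this

theorem exp_hat_conj {R : Mat3} (hR : R ∈ SO3) (v : Fin 3 → ℝ) (θ : ℝ) :
    NormedSpace.exp (θ • hat (R *ᵥ v)) = R * NormedSpace.exp (θ • hat v) * Rᵀ := by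
  have h : R * (θ • hat v) * Rᵀ = θ • (R * hat v * Rᵀ) := by
    rw [mul_smul_comm, smul_mul_assoc]
  rw [hat_conj hR, ← h, exp_conj_so3 hR]

theorem hat0 : hat (Pi.single (0:Fin 3) 1) = !![0,0,0; 0,0,-1; 0,1,0] := by
  simp [hat, Pi.single_apply]
theorem hat1 : hat (Pi.single (1:Fin 3) 1) = !![0,0,1; 0,0,0; -1,0,0] := by
  simp [hat, Pi.single_apply]
theorem hat2 : hat (Pi.single (2:Fin 3) 1) = !![0,-1,0; 1,0,0; 0,0,0] := by
  simp [hat, Pi.single_apply]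

theorem fin3_cases (i : Fin 3) : i = 0 ∨ i = 1 ∨ i = 2 := by fin_cases i <;> simp

theorem hat_single_cube (i : Fin 3) :
    hat (Pi.single i 1) * hat (Pi.single i 1) * hat (Pi.single i 1)
      = -(hat (Pi.single i 1)) := by
  rcases fin3_cases i with hi | hi | hi <;> subst hi <;> [rw [hat0]; rw [hat1]; rw [hat2]] <;>
    · ext a b
      fin_cases a <;> fin_cases b <;> simp [Matrix.mul_apply, Fin.sum_univ_three, Matrix.vecHead, Matrix.vecTail]

theorem trace_diag_exp (s : Fin 3 → ℝ) (θ : ℝ) (i : Fin 3) :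
    (Matrix.diagonal s * NormedSpace.exp (θ • hat (Pi.single i 1))).trace
      = s i + ((∑ a, s a) - s i) * Real.cos θ := by
  rw [exp_cube_mat _ (hat_single_cube i)]
  rcases fin3_cases i with hi | hi | hi <;> subst hi <;> [rw [hat0]; rw [hat1]; rw [hat2]] <;>
    · simp [Matrix.trace, Matrix.diag, Matrix.mul_apply, Fin.sum_univ_three, Matrix.diagonal,
        Matrix.one_apply, Matrix.vecHead, Matrix.vecTail]
      ring_nf

theorem meas_entry (a b : Fin 3) : Measurable fun R : Mat3 => R a b :=
  (measurable_pi_apply b).comp (measurable_pi_apply a)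

theorem meas_mul_left (A : Mat3) : Measurable fun R : Mat3 => A * R := by
  apply measurable_pi_lambda; intro a
  apply measurable_pi_lambda; intro b
  simp only [Matrix.mul_apply]
  exact Finset.measurable_sum _ fun k _ => (meas_entry k b).const_mul (A a k)

theorem meas_mul_right (B : Mat3) : Measurable fun R : Mat3 => R * B := by
  apply measurable_pi_lambda; intro a
  apply measurable_pi_lambda; intro b
  simp only [Matrix.mul_apply]
  exact Finset.measurable_sum _ fun k _ => (meas_entry a k).mul_const (B k b)

theorem meas_integrand (S : Mat3) : Measurable fun Q : Mat3 => Real.exp ((Sᵀ * Q).trace) := by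
  apply Real.measurable_exp.comp
  simp only [Matrix.trace, Matrix.diag, Matrix.mul_apply]
  exact Finset.measurable_sum _ fun a _ =>
    Finset.measurable_sum _ fun k _ => (meas_entry k a).const_mul (Sᵀ a k)

theorem cF_conj (ν : Measure Mat3) (hν : IsHaarSO3 ν) (U V S : Mat3)
    (hU : U ∈ SO3) (hV : V ∈ SO3) : cF ν (U * S * Vᵀ) = cF ν S := by
  have hmap : Measure.map (fun Q : Mat3 => Uᵀ * Q * V) ν = ν := by
    have hco : (fun Q : Mat3 => Uᵀ * Q * V)
        = (fun Q : Mat3 => Q * V) ∘ (fun Q : Mat3 => Uᵀ * Q) := rfl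
    rw [hco, ← Measure.map_map (meas_mul_right V) (meas_mul_left Uᵀ),
      hν.2.2.1 Uᵀ (SO3_transpose hU), hν.2.2.2 V hV]
  have htr : ∀ Q : Mat3, ((U * S * Vᵀ)ᵀ * Q).trace = (Sᵀ * (Uᵀ * Q * V)).trace := by
    intro Q
    have h1 : (U * S * Vᵀ)ᵀ * Q = V * (Sᵀ * (Uᵀ * Q)) := by
      rw [Matrix.transpose_mul, Matrix.transpose_mul, Matrix.transpose_transpose]
      simp only [Matrix.mul_assoc]
    rw [h1, Matrix.trace_mul_comm]
    congr 1
    noncomm_ring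
  unfold cF
  simp_rw [htr]
  calc ∫ Q, Real.exp ((Sᵀ * (Uᵀ * Q * V)).trace) ∂ν
      = ∫ Q, Real.exp ((Sᵀ * Q).trace) ∂(Measure.map (fun Q : Mat3 => Uᵀ * Q * V) ν) := by
        rw [integral_map (by exact ((meas_mul_right V).comp (meas_mul_left Uᵀ)).aemeasurable)
          (meas_integrand S).aestronglyMeasurable]
    _ = ∫ Q, Real.exp ((Sᵀ * Q).trace) ∂ν := by rw [hmap]

/-- With `F = USVᵀ`, `M = UVᵀ` and `R(θ) = exp(θ(Ue_i)∧)M`, one has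
`exp(θ(Ue_i)∧)M = M exp(θ(Ve_i)∧)`, `tr(FᵀR(θ)) = s_i + (s_j + s_k)cos θ`, and
`p(R(θ); F) = (e^{s_i}/c(S))·exp((s_j + s_k)cos θ)`. -/
theorem stmt17 (ν : Measure Mat3) (hν : IsHaarSO3 ν)
    (U V : Mat3) (hU : U ∈ SO3) (hV : V ∈ SO3)
    (s : Fin 3 → ℝ) (S : Mat3) (hS : S = Matrix.diagonal s)
    (F M : Mat3) (hF : F = U * S * Vᵀ) (hM : M = U * Vᵀ)
    (i j k : Fin 3) (hij : i ≠ j) (hjk : j ≠ k) (hik : i ≠ k) (θ : ℝ) :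
    NormedSpace.exp (θ • hat (U *ᵥ Pi.single i 1)) * M
      = M * NormedSpace.exp (θ • hat (V *ᵥ Pi.single i 1)) ∧
    (Fᵀ * (NormedSpace.exp (θ • hat (U *ᵥ Pi.single i 1)) * M)).trace
      = s i + (s j + s k) * Real.cos θ ∧
    Real.exp ((Fᵀ * (NormedSpace.exp (θ • hat (U *ᵥ Pi.single i 1)) * M)).trace)
        / cF ν F
      = (Real.exp (s i) / cF ν S) * Real.exp ((s j + s k) * Real.cos θ) := by
  set E := NormedSpace.exp (θ • hat (Pi.single i 1)) with hE
  have hexpU : NormedSpace.exp (θ • hat (U *ᵥ Pi.single i 1)) = U * E * Uᵀ :=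
    exp_hat_conj hU _ θ
  have hexpV : NormedSpace.exp (θ • hat (V *ᵥ Pi.single i 1)) = V * E * Vᵀ :=
    exp_hat_conj hV _ θ
  have e1 : U * E * Uᵀ * (U * Vᵀ) = U * E * Vᵀ := by
    simp only [Matrix.mul_assoc]
    rw [← Matrix.mul_assoc Uᵀ U Vᵀ, hU.1, Matrix.one_mul]
  have e2 : U * Vᵀ * (V * E * Vᵀ) = U * E * Vᵀ := by
    simp only [Matrix.mul_assoc]
    rw [← Matrix.mul_assoc Vᵀ V (E * Vᵀ), hV.1, Matrix.one_mul]
  have part1 : NormedSpace.exp (θ • hat (U *ᵥ Pi.single i 1)) * M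
      = M * NormedSpace.exp (θ • hat (V *ᵥ Pi.single i 1)) := by
    rw [hexpU, hexpV, hM, e1, e2]
  have hsum : (∑ a, s a) - s i = s j + s k := by
    have h3 : (∑ a, s a) = s 0 + s 1 + s 2 := by simp [Fin.sum_univ_three]
    fin_cases i <;> fin_cases j <;> fin_cases k <;> simp_all <;> ring
  have part2 : (Fᵀ * (NormedSpace.exp (θ • hat (U *ᵥ Pi.single i 1)) * M)).trace
      = s i + (s j + s k) * Real.cos θ := by
    have hFt : Fᵀ = V * S * Uᵀ := by
      rw [hF, Matrix.transpose_mul, Matrix.transpose_mul, Matrix.transpose_transpose, hS,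
        Matrix.diagonal_transpose, ← hS, Matrix.mul_assoc]
    have h4 : Fᵀ * (NormedSpace.exp (θ • hat (U *ᵥ Pi.single i 1)) * M)
        = V * (S * E) * Vᵀ := by
      rw [hexpU, hM, e1, hFt]
      simp only [Matrix.mul_assoc]
      rw [← Matrix.mul_assoc Uᵀ U (E * Vᵀ), hU.1, Matrix.one_mul]
    rw [h4, Matrix.trace_mul_cycle, hV.1, Matrix.one_mul, hS, ← hsum]
    exact trace_diag_exp s θ i
  refine ⟨part1, part2, ?_⟩
  rw [part2, hF, cF_conj ν hν U V S hU hV, Real.exp_add]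
  ring
end
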